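/- Let n ≥ 3 and let x be a positive divisor of n with x < n. If D = {(cx) mod n : c a positive integer} (the set of multiples of x reduced modulo n), then the unidirectional oriented cycle C⃗_n is not D-antimagic; indeed, the vertices v_1 and v_{1+x} have the same D-neighborhood, hence equal D-weights under every bijective labeling. -/
import Mathlib


open scoped Classical

/-- There is a directed walk of length `k` from `u` to `v` in the digraph with arc relation `A`. -/
def WalkLen {V : Type*} (A : V → V → Prop) : ℕ → V → V → Prop
  | 0, u, v => u = v
  | k + 1, u, v => ∃ w, A u w ∧ WalkLen A k w v

/-- The directed distance from `u` to `v` is exactly `k`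
(i.e. `k` is the length of a shortest directed path from `u` to `v`). -/
def HasDist {V : Type*} (A : V → V → Prop) (u v : V) (k : ℕ) : Prop :=
  WalkLen A k u v ∧ ∀ m < k, ¬ WalkLen A m u v

/-- `y` belongs to the `D`-neighborhood of `v`: the distance from `v` to `y` lies in `D`. -/
def InDNbhd {V : Type*} (A : V → V → Prop) (D : Set ℕ) (v y : V) : Prop :=
  ∃ k ∈ D, HasDist A v y k

/-- The `D`-weight of `v` under the labeling `f`: the sum of labels of the `D`-neighbors. -/
noncomputable def dWeight {V : Type*} [Fintype V] (A : V → V → Prop) (D : Set ℕ)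
    (f : V → ℕ) (v : V) : ℕ :=
  ∑ y : V, if InDNbhd A D v y then f y else 0

/-- The digraph `(V, A)` is `D`-antimagic: some bijective labeling of the vertices by
`1, …, |V|` gives pairwise distinct `D`-weights. -/
def DAntimagic (V : Type*) [Fintype V] (A : V → V → Prop) (D : Set ℕ) : Prop :=
  ∃ f : V ≃ Fin (Fintype.card V),
    Function.Injective fun v => dWeight A D (fun y => (f y : ℕ) + 1) v

/-- The orientation of the cycle `C_n` determined by `σ`: the edge between vertex `i` and
vertex `(i+1) mod n` is directed `i → i+1` when `σ i = true`, and `i+1 → i` otherwise. -/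
def cycleArc (n : ℕ) (σ : Fin n → Bool) (u v : Fin n) : Prop :=
  (σ u = true ∧ (v : ℕ) = ((u : ℕ) + 1) % n) ∨
  (σ v = false ∧ (u : ℕ) = ((v : ℕ) + 1) % n)

/-- The arc relation of the unidirectional oriented cycle `C⃗_n`: arcs `i → (i+1) mod n`. -/
def uniArc (n : ℕ) (u v : Fin n) : Prop :=
  (v : ℕ) = ((u : ℕ) + 1) % n

/-- An orientation of `C_n` is unidirectional if all edges are directed the same way around. -/
def Unidirectional (n : ℕ) (σ : Fin n → Bool) : Prop :=
  (∀ i, σ i = true) ∨ (∀ i, σ i = false)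

/-- A sink: a vertex of out-degree 0. -/
def IsSink {V : Type*} (A : V → V → Prop) (u : V) : Prop :=
  ∀ v, ¬ A u v

/-- A source: a vertex of in-degree 0. -/
def IsSource {V : Type*} (A : V → V → Prop) (u : V) : Prop :=
  ∀ v, ¬ A v u

/-- A digraph is Θ-oriented if it has exactly one sink and exactly one source, and
they are adjacent (so the arc between them goes from the source to the sink). -/
def ThetaOriented {V : Type*} (A : V → V → Prop) : Prop :=
  ∃ s t, IsSink A s ∧ IsSource A t ∧ (∀ u, IsSink A u → u = s) ∧
    (∀ u, IsSource A u → u = t) ∧ A t s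

/-- The arc relation of the Θ-oriented cycle on `Fin n`:
arcs `i → i+1` for `0 ≤ i ≤ n-2`, together with the arc `0 → n-1`. -/
def thetaArc (n : ℕ) (u v : Fin n) : Prop :=
  ((v : ℕ) = (u : ℕ) + 1) ∨ ((u : ℕ) = 0 ∧ (v : ℕ) = n - 1)

/-- The arc relation of a disjoint union of `c` oriented cycles, the `j`-th component having
`len j` vertices and arc relation `A j`. -/
def unionArc (c : ℕ) (len : Fin c → ℕ)
    (A : ∀ j, Fin (len j) → Fin (len j) → Prop)
    (u v : Σ j, Fin (len j)) : Prop :=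
  ∃ h : u.1 = v.1, A v.1 (Fin.cast (congrArg len h) u.2) v.2

lemma walkLen_uni_iff (n : ℕ) (hn : 0 < n) :
    ∀ (k : ℕ) (u v : Fin n), WalkLen (uniArc n) k u v ↔ (v : ℕ) = ((u : ℕ) + k) % n := by
  intro k
  induction k with
  | zero =>
    intro u v
    show u = v ↔ _
    rw [Nat.add_zero, Nat.mod_eq_of_lt u.isLt]
    exact ⟨fun h => h ▸ rfl, fun h => Fin.ext h.symm⟩
  | succ k ih =>
    intro u v
    constructor
    · rintro ⟨w, hw, hwalk⟩
      have hv := (ih w v).mp hwalk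
      rw [hv, hw, Nat.mod_add_mod]
      congr 1; omega
    · intro h
      refine ⟨⟨((u : ℕ) + 1) % n, Nat.mod_lt _ hn⟩, rfl, ?_⟩
      rw [ih]
      show (v : ℕ) = (((u : ℕ) + 1) % n + k) % n
      rw [Nat.mod_add_mod, h]
      congr 1; omega

lemma key1 (n u v m : ℕ) (hn : 0 < n) (hu : u < n) (hm : m < n)
    (h : v = (u + m) % n) : m = (v + n - u) % n := by
  rcases le_or_gt n (u + m) with hc | hc
  · rw [Nat.mod_eq_sub_mod hc, Nat.mod_eq_of_lt (by omega)] at h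
    have : v + n - u = m := by omega
    rw [this, Nat.mod_eq_of_lt hm]
  · rw [Nat.mod_eq_of_lt hc] at h
    have : v + n - u = m + n := by omega
    rw [this, Nat.add_mod_right, Nat.mod_eq_of_lt hm]

lemma key2 (n u v : ℕ) (hn : 0 < n) (hu : u < n) (hv : v < n) :
    v = (u + (v + n - u) % n) % n := by
  rcases le_or_gt u v with hc | hc
  · have h1 : (v + n - u) % n = v - u := by
      rw [Nat.mod_eq_sub_mod (by omega), Nat.mod_eq_of_lt (by omega)]
      omega
    rw [h1]
    have : u + (v - u) = v := by omega
    rw [this, Nat.mod_eq_of_lt hv]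
  · have h1 : (v + n - u) % n = v + n - u := Nat.mod_eq_of_lt (by omega)
    rw [h1]
    have : u + (v + n - u) = v + n := by omega
    rw [this, Nat.add_mod_right, Nat.mod_eq_of_lt hv]

lemma hasDist_uni_iff (n : ℕ) (hn : 0 < n) (u v : Fin n) (k : ℕ) :
    HasDist (uniArc n) u v k ↔ k = ((v : ℕ) + n - (u : ℕ)) % n := by
  have hd : ((v : ℕ) + n - (u : ℕ)) % n < n := Nat.mod_lt _ hn
  have hwd : WalkLen (uniArc n) (((v : ℕ) + n - (u : ℕ)) % n) u v := by
    rw [walkLen_uni_iff n hn]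
    exact key2 n u v hn u.isLt v.isLt
  constructor
  · rintro ⟨hw, hmin⟩
    have hk : k ≤ ((v : ℕ) + n - (u : ℕ)) % n := by
      by_contra hlt
      exact hmin _ (by omega) hwd
    exact key1 n u v k hn u.isLt (by omega) ((walkLen_uni_iff n hn k u v).mp hw)
  · rintro rfl
    refine ⟨hwd, fun m hm hw => ?_⟩
    have := key1 n u v m hn u.isLt (by omega) ((walkLen_uni_iff n hn m u v).mp hw)
    omega

lemma inDNbhd_uni_iff (n : ℕ) (hn : 0 < n) (D : Set ℕ) (u y : Fin n) :
    InDNbhd (uniArc n) D u y ↔ ((y : ℕ) + n - (u : ℕ)) % n ∈ D := by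
  constructor
  · rintro ⟨k, hk, hd⟩
    rwa [(hasDist_uni_iff n hn u y k).mp hd] at hk
  · intro h
    exact ⟨_, h, (hasDist_uni_iff n hn u y _).mpr rfl⟩

/-- If `x` is a positive divisor of `n` with `x < n` and
`D = {(c·x) mod n : c ≥ 1}`, then in the unidirectional `C⃗_n` the vertices `v_1` and
`v_{1+x}` have the same `D`-neighborhood, and `C⃗_n` is not `D`-antimagic. -/
theorem divisor_distanceSet_not_antimagic (n x : ℕ) (hn : 3 ≤ n) (hx : 0 < x)
    (hxn : x < n) (hdvd : x ∣ n) (D : Set ℕ)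
    (hD : D = {m : ℕ | ∃ c : ℕ, 0 < c ∧ m = (c * x) % n}) :
    (∀ y : Fin n,
        InDNbhd (uniArc n) D (⟨0, by omega⟩ : Fin n) y ↔
          InDNbhd (uniArc n) D (⟨x, hxn⟩ : Fin n) y) ∧
      ¬ DAntimagic (Fin n) (uniArc n) D := by
  have hn0 : 0 < n := by omega
  -- membership in D for values below n
  have memD : ∀ d : ℕ, d < n → (d ∈ D ↔ x ∣ d) := by
    intro d hd
    rw [hD]
    constructor
    · rintro ⟨c, hc, rfl⟩
      have h1 : n * ((c * x) / n) + (c * x) % n = c * x := Nat.div_add_mod _ _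
      have h2 : x ∣ c * x := dvd_mul_left x c
      have h3 : x ∣ n * ((c * x) / n) := hdvd.mul_right _
      have : (c * x) % n = c * x - n * ((c * x) / n) := by omega
      rw [this]
      exact Nat.dvd_sub h2 h3
    · rintro ⟨t, rfl⟩
      rcases Nat.eq_zero_or_pos t with rfl | ht
      · refine ⟨n / x, Nat.div_pos (le_of_lt hxn) hx, ?_⟩
        rw [Nat.div_mul_cancel hdvd, Nat.mod_self, Nat.mul_zero]
      · refine ⟨t, ht, ?_⟩
        rw [Nat.mul_comm t x, Nat.mod_eq_of_lt hd]
  -- the main neighborhood equivalence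
  have main : ∀ y : Fin n,
      InDNbhd (uniArc n) D (⟨0, by omega⟩ : Fin n) y ↔
        InDNbhd (uniArc n) D (⟨x, hxn⟩ : Fin n) y := by
    intro y
    rw [inDNbhd_uni_iff n hn0, inDNbhd_uni_iff n hn0]
    have hy := y.isLt
    have e0 : ((y : ℕ) + n - ((⟨0, by omega⟩ : Fin n) : ℕ)) % n = (y : ℕ) := by
      show ((y : ℕ) + n - 0) % n = (y : ℕ)
      rw [Nat.sub_zero, Nat.add_mod_right, Nat.mod_eq_of_lt hy]
    have ex : ((y : ℕ) + n - ((⟨x, hxn⟩ : Fin n) : ℕ)) % n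
        = ((y : ℕ) + n - x) % n := rfl
    rw [e0, ex, memD _ hy, memD _ (Nat.mod_lt _ hn0),
        Nat.dvd_mod_iff hdvd]
    constructor
    · intro h
      exact Nat.dvd_sub (Nat.dvd_add h hdvd) dvd_rfl
    · intro h
      have h2 : x ∣ (y : ℕ) + n := by
        have := Nat.dvd_add h (dvd_refl x)
        rwa [Nat.sub_add_cancel (by omega)] at this
      have := Nat.dvd_sub h2 hdvd
      rwa [Nat.add_sub_cancel] at this
  refine ⟨main, ?_⟩
  rintro ⟨f, hf⟩
  have heq : dWeight (uniArc n) D (fun y => (f y : ℕ) + 1) (⟨0, by omega⟩ : Fin n)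
      = dWeight (uniArc n) D (fun y => (f y : ℕ) + 1) (⟨x, hxn⟩ : Fin n) := by
    unfold dWeight
    refine Finset.sum_congr rfl fun y _ => ?_
    exact if_congr (main y) rfl rfl
  have := hf heq
  have : (0 : ℕ) = x := congrArg Fin.val this
  omega
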